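/- Let f:(0,∞)→(0,∞) be AG-convex, and let a_1,…,a_n, b_1,…,b_n > 0 with A=∑a_i, B=∑b_i. Then B·f(A/B) ≤ B·exp( (1/B) ∑_i b_i log f(a_i/b_i) ) ≤ ∑_i b_i f(a_i/b_i). -/

import Mathlib

theorem csiszar_ag (f : ℝ → ℝ) (hf : ∀ x ∈ Set.Ioi (0:ℝ), 0 < f x)
    (hAG : ∀ x ∈ Set.Ioi (0:ℝ), ∀ y ∈ Set.Ioi (0:ℝ), ∀ α ∈ Set.Icc (0:ℝ) 1,
      f (α * x + (1 - α) * y) ≤ f x ^ α * f y ^ (1 - α))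
    (n : ℕ) (a b : Fin n → ℝ) (ha : ∀ i, 0 < a i) (hb : ∀ i, 0 < b i)
    (A B : ℝ) (hA : A = ∑ i, a i) (hB : B = ∑ i, b i) :
    B * f (A / B) ≤ B * Real.exp ((1 / B) * ∑ i, b i * Real.log (f (a i / b i))) ∧
      B * Real.exp ((1 / B) * ∑ i, b i * Real.log (f (a i / b i))) ≤
        ∑ i, b i * f (a i / b i) := by
  rcases Nat.eq_zero_or_pos n with hn | hn
  · subst hn
    simp [hB]
  · have hne : (Finset.univ : Finset (Fin n)).Nonempty := ⟨⟨0, hn⟩, Finset.mem_univ _⟩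
    have hB0 : 0 < B := hB ▸ Finset.sum_pos (fun i _ => hb i) hne
    have hA0 : 0 < A := hA ▸ Finset.sum_pos (fun i _ => ha i) hne
    have hAB : A / B ∈ Set.Ioi (0:ℝ) := div_pos hA0 hB0
    -- log ∘ f is convex on Ioi 0
    have hgc : ConvexOn ℝ (Set.Ioi (0:ℝ)) (fun x => Real.log (f x)) := by
      refine ⟨convex_Ioi 0, fun x hx y hy p q hp hq hpq => ?_⟩
      have hq' : q = 1 - p := by linarith
      have hmem : p • x + q • y ∈ Set.Ioi (0:ℝ) := (convex_Ioi (0:ℝ)) hx hy hp hq hpq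
      have h := hAG x hx y hy p ⟨hp, by linarith⟩
      have hx' := hf x hx
      have hy' := hf y hy
      have hlog := Real.log_le_log (hf _ (by rw [hq'] at hmem; simpa using hmem)) h
      simp only [smul_eq_mul, hq']
      calc Real.log (f (p * x + (1 - p) * y)) ≤ Real.log (f x ^ p * f y ^ (1 - p)) := hlog
        _ = p * Real.log (f x) + (1 - p) * Real.log (f y) := by
            rw [Real.log_mul (Real.rpow_pos_of_pos hx' _).ne' (Real.rpow_pos_of_pos hy' _).ne',
              Real.log_rpow hx', Real.log_rpow hy']
    have hw : ∀ i ∈ Finset.univ, (0:ℝ) ≤ b i / B := fun i _ => (div_pos (hb i) hB0).le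
    have hw1 : ∑ i, b i / B = 1 := by rw [← Finset.sum_div, ← hB, div_self hB0.ne']
    have hmem : ∀ i ∈ (Finset.univ : Finset (Fin n)), a i / b i ∈ Set.Ioi (0:ℝ) :=
      fun i _ => div_pos (ha i) (hb i)
    have hsum : ∑ i, (b i / B) • (a i / b i) = A / B := by
      rw [hA, Finset.sum_div]
      refine Finset.sum_congr rfl fun i _ => ?_
      have := (hb i).ne'
      field_simp
      rw [smul_eq_mul]; field_simp [hB0.ne']
    have hrw : (1 / B) * ∑ i, b i * Real.log (f (a i / b i))
        = ∑ i, (b i / B) • Real.log (f (a i / b i)) := by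
      rw [Finset.mul_sum]
      refine Finset.sum_congr rfl fun i _ => ?_
      simp [smul_eq_mul]; ring
    constructor
    · have hjen := hgc.map_sum_le hw hw1 hmem
      rw [hsum] at hjen
      have h1 : f (A / B) ≤ Real.exp ((1 / B) * ∑ i, b i * Real.log (f (a i / b i))) := by
        rw [← Real.exp_log (hf _ hAB), hrw]
        exact Real.exp_le_exp.mpr (by simpa using hjen)
      exact mul_le_mul_of_nonneg_left h1 hB0.le
    · have h2 := convexOn_exp.map_sum_le hw hw1 (fun i _ => Set.mem_univ _)
        (p := fun i => Real.log (f (a i / b i)))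
      rw [hrw]
      calc B * Real.exp (∑ i, (b i / B) • Real.log (f (a i / b i)))
          ≤ B * ∑ i, (b i / B) • Real.exp (Real.log (f (a i / b i))) :=
            mul_le_mul_of_nonneg_left h2 hB0.le
        _ = ∑ i, b i * f (a i / b i) := by
            rw [Finset.mul_sum]
            refine Finset.sum_congr rfl fun i _ => ?_
            rw [smul_eq_mul, Real.exp_log (hf _ (hmem i (Finset.mem_univ i)))]
            field_simp
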